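/- Let G=(V,E) be a finite simple graph and let G'=(V',E') be constructed as follows: V' = V ∪ {u_v : (u,v) ∈ (V×V)∖E, u≠v} (where u_v and v_u are distinct new vertices for each non-adjacent unordered pair {u,v}), E' = E ∪ {(u, u_v) : (u,v) non-adjacent}, and the coloring gives each vertex of V a distinct color while u_v and v_u share a color unique to the pair {u,v}. If V can be partitioned into k sets each inducing a clique in G, then there exists a subset E''⊆E' such that the graph (V', E'∖E'') has at most k connected components, each of which is colorful. -/

import Mathlib

open scoped Classical

/-- Vertex set of the MCC reduction graph: base vertices plus, for each ordered
pair `(u,v)` of distinct non-adjacent vertices, an additional vertex `u_v`. -/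
def mccVert {V : Type*} (G : SimpleGraph V) : Type _ :=
  V ⊕ {p : V × V // p.1 ≠ p.2 ∧ ¬ G.Adj p.1 p.2}

/-- Coloring of the MCC reduction graph: each base vertex gets its own color;
the additional vertices `u_v` and `v_u` share the color `s(u,v)`. -/
def mccColor {V : Type*} (G : SimpleGraph V) : mccVert G → V ⊕ Sym2 V
  | Sum.inl u => Sum.inl u
  | Sum.inr p => Sum.inr s(p.val.1, p.val.2)

/-- Edges of the MCC reduction graph: the base edges of `G`, plus an edge from
each additional vertex `u_v` to the base vertex `u`. -/
def mccGraph {V : Type*} (G : SimpleGraph V) : SimpleGraph (mccVert G) :=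
  SimpleGraph.fromRel (fun x y =>
    match x, y with
    | Sum.inl u, Sum.inl w => G.Adj u w
    | Sum.inl u, Sum.inr p => p.val.1 = u
    | _, _ => False)


/-- If `G` can be partitioned into `k` cliques, then some subgraph of the MCC
reduction graph (obtained by deleting edges) has all components colorful and at
most `k` connected components. -/
theorem stmt6 {V : Type*} [Fintype V] [DecidableEq V] (G : SimpleGraph V) (k : ℕ)
    (P : V → Fin k) (hP : ∀ u v : V, P u = P v → u ≠ v → G.Adj u v) :
    ∃ H : SimpleGraph (mccVert G), H ≤ mccGraph G ∧
      (∀ x y : mccVert G, H.Reachable x y → mccColor G x = mccColor G y → x = y) ∧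
      Nat.card H.ConnectedComponent ≤ k := by
  -- The subgraph keeps only clique edges (same `P`-class) and all pendant edges.
  set H : SimpleGraph (mccVert G) := SimpleGraph.fromRel (fun x y =>
    match x, y with
    | Sum.inl u, Sum.inl w => G.Adj u w ∧ P u = P w
    | Sum.inl u, Sum.inr p => p.val.1 = u
    | _, _ => False) with hH
  -- class of a vertex
  set c : mccVert G → Fin k := fun x =>
    match x with
    | Sum.inl u => P u
    | Sum.inr p => P p.val.1 with hc
  have hadj_c : ∀ x y, H.Adj x y → c x = c y := by
    rintro x y ⟨hne, h | h⟩ <;>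
      · rcases x with u | p <;> rcases y with w | q <;> simp_all [c] <;>
          first
            | exact h.2
            | exact h.2.symm
            | (subst h; rfl)
  have hreach_c : ∀ x y, H.Reachable x y → c x = c y := by
    intro x y hxy
    obtain ⟨w⟩ := hxy
    induction w with
    | nil => rfl
    | cons h _ ih => exact (hadj_c _ _ h).trans ih
  -- any vertex reaches its base vertex
  have hbase : ∀ x : mccVert G, ∃ u : V, P u = c x ∧ H.Reachable x (Sum.inl u) := by
    rintro (u | p)
    · exact ⟨u, rfl, SimpleGraph.Reachable.refl _⟩
    · refine ⟨p.val.1, rfl, SimpleGraph.Reachable.symm (SimpleGraph.Adj.reachable ?_)⟩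
      rw [hH]
      exact (SimpleGraph.fromRel_adj _ _ _).mpr ⟨by exact Sum.inl_ne_inr, Or.inl rfl⟩
  have hsame : ∀ x y, c x = c y → H.Reachable x y := by
    intro x y hxy
    obtain ⟨u, hu, hru⟩ := hbase x
    obtain ⟨v, hv, hrv⟩ := hbase y
    have hPuv : P u = P v := by rw [hu, hv, hxy]
    refine hru.trans (SimpleGraph.Reachable.trans ?_ hrv.symm)
    rcases eq_or_ne u v with rfl | hne
    · rfl
    · refine SimpleGraph.Adj.reachable ?_
      rw [hH]
      exact (SimpleGraph.fromRel_adj _ _ _).mpr ⟨fun h => hne (Sum.inl.inj h), Or.inl ⟨hP u v hPuv hne, hPuv⟩⟩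
  refine ⟨H, ?_, ?_, ?_⟩
  · -- H ≤ mccGraph G
    rintro x y ⟨hne, h | h⟩ <;> refine ⟨hne, ?_⟩
    · left; rcases x with u | p <;> rcases y with w | q <;> simp_all [mccGraph] <;> exact h.1
    · right; rcases x with u | p <;> rcases y with w | q <;> simp_all [mccGraph] <;> exact h.1
  · -- colorful components
    intro x y hr hcol
    rcases x with u | p <;> rcases y with w | q <;> simp [mccColor] at hcol ⊢
    · exact congrArg Sum.inl hcol
    · rcases hcol with h | h
      · exact congrArg Sum.inr (Subtype.ext h)
      · exfalso
        have h1 : p.val.1 = q.val.2 := by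
          have := congrArg Prod.fst h; simpa using this
        have h2 : p.val.2 = q.val.1 := by
          have := congrArg Prod.snd h; simpa using this
        have hc' := hreach_c _ _ hr
        simp only [c] at hc'
        rw [h1] at hc'
        have : G.Adj q.val.2 q.val.1 := hP _ _ hc' (fun hq => q.prop.1 hq.symm)
        exact q.prop.2 this.symm
  · -- at most k components
    have hinj : Function.Injective
        (SimpleGraph.ConnectedComponent.lift c (fun v w p _ => hreach_c v w ⟨p⟩) :
          H.ConnectedComponent → Fin k) := by
      intro a b
      refine SimpleGraph.ConnectedComponent.ind₂ (fun x y h => ?_) a b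
      exact SimpleGraph.ConnectedComponent.sound (hsame x y h)
    calc Nat.card H.ConnectedComponent ≤ Nat.card (Fin k) :=
          Nat.card_le_card_of_injective _ hinj
      _ = k := by simp
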